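/- Let 𝐋 be a totally real field that is an algebraic (possibly infinite-degree) extension of ℚ, and let K ⊆ 𝐋 be a number field. Let α ∈ 𝒪_𝐋 and suppose there exist b ∈ 𝒪_K, an ideal I of 𝒪_K, and u₁, u₂, u₃, u₄ ∈ 𝒪_𝐋 such that: I·𝒪_𝐋 ⊆ (2α + 1)²·𝒪_𝐋, α = 1 + u₁² + u₂² + u₃² + u₄², and α − b ∈ I·𝒪_𝐋. Then α lies in K (equivalently, α is in the image of 𝒪_K in 𝒪_𝐋). -/

import Mathlib

/-- The natural map between integral closures of `ℤ` induced by a field extension `K → L`. -/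
noncomputable def intMap (K L : Type*) [Field K] [Field L] [Algebra K L] :
    integralClosure ℤ K →+* integralClosure ℤ L where
  toFun x := ⟨algebraMap K L (x : K), IsIntegral.map ((algebraMap K L).toIntAlgHom) x.2⟩
  map_one' := by ext; simp
  map_mul' x y := by ext; simp
  map_zero' := by ext; simp
  map_add' x y := by ext; simp

/-- The induced algebra structure `𝒪_K → 𝒪_L`. -/
noncomputable instance intClosureAlgebra (K L : Type*) [Field K] [Field L] [Algebra K L] :
    Algebra (integralClosure ℤ K) (integralClosure ℤ L) :=
  (intMap K L).toAlgebra

set_option synthInstance.maxHeartbeats 1000000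
set_option maxHeartbeats 2000000

open Polynomial in
lemma small_conj_eq_zero {F : Type*} [Field F] [CharZero F]
    [Algebra.IsAlgebraic ℚ F] (e : F) (hint : IsIntegral ℤ e)
    (hsmall : ∀ τ : F →ₐ[ℚ] ℂ, ‖τ e‖₊ ≤ 1/2) : e = 0 := by
  by_contra he
  have hq : IsIntegral ℚ e := hint.tower_top
  have hmap := minpoly.isIntegrallyClosed_eq_field_fractions' ℚ hint
  set p : ℚ[X] := minpoly ℚ e with hp
  have hc0 : p.coeff 0 ≠ 0 := minpoly.coeff_zero_ne_zero hq he
  have hcz : p.coeff 0 = ((minpoly ℤ e).coeff 0 : ℚ) := by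
    rw [hmap, coeff_map, eq_intCast]
  have hone : (1 : ℝ) ≤ |(p.coeff 0 : ℝ)| := by
    rw [hcz] at hc0 ⊢
    push_cast
    rw [← Int.cast_abs]
    have : (1:ℤ) ≤ |(minpoly ℤ e).coeff 0| := by
      refine Int.one_le_abs ?_
      exact_mod_cast fun h => hc0 (by exact_mod_cast h)
    exact_mod_cast this
  set P : ℂ[X] := p.map (algebraMap ℚ ℂ) with hP
  have hmo : P.Monic := (minpoly.monic hq).map _
  have hsp : P.Splits :=
    IsAlgClosed.splits P
  have hcoeff := hsp.coeff_zero_eq_prod_roots_of_monic hmo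
  have hcard : P.roots.card = P.natDegree := splits_iff_card_roots.1 hsp
  have hdeg : 1 ≤ P.natDegree := by
    rw [(minpoly.monic hq).natDegree_map]
    exact minpoly.natDegree_pos hq
  have hroots : ∀ z ∈ P.roots, ‖z‖₊ ≤ 1/2 := by
    intro z hz
    have hzr : z ∈ p.rootSet ℂ := by
      rw [mem_rootSet]
      refine ⟨minpoly.ne_zero hq, ?_⟩
      rw [aeval_def, eval₂_eq_eval_map]
      exact isRoot_of_mem_roots hz
    rw [← Algebra.IsAlgebraic.range_eval_eq_rootSet_minpoly ℂ e] at hzr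
    obtain ⟨ψ, rfl⟩ := hzr
    exact hsmall ψ
  have habs : ‖P.coeff 0‖₊ ≤ (1/2 : NNReal) ^ P.natDegree := by
    rw [hcoeff, nnnorm_mul]
    have h1 : ‖(-1 : ℂ) ^ P.natDegree‖₊ = 1 := by
      simp
    have hmp : ‖P.roots.prod‖₊ = (P.roots.map (‖·‖₊)).prod := by
      simpa using map_multiset_prod (nnnormHom : ℂ →*₀ NNReal) P.roots
    rw [h1, one_mul, hmp]
    calc (P.roots.map (‖·‖₊)).prod ≤ (1/2 : NNReal) ^ (P.roots.map (‖·‖₊)).card := by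
          refine Multiset.prod_le_pow_card _ _ ?_
          intro x hx
          obtain ⟨z, hz, rfl⟩ := Multiset.mem_map.1 hx
          exact hroots z hz
      _ = (1/2 : NNReal) ^ P.natDegree := by rw [Multiset.card_map, hcard]
  have hlt : ((1/2 : NNReal) : ℝ) ^ P.natDegree < 1 := by
    apply pow_lt_one₀ (by norm_num) (by norm_num); omega
  have hPc : ‖P.coeff 0‖ = |(p.coeff 0 : ℝ)| := by
    rw [hP, coeff_map]
    have : (algebraMap ℚ ℂ) (p.coeff 0) = (((p.coeff 0 : ℝ)) : ℂ) := by
      push_cast; rfl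
    rw [this, Complex.norm_real, Real.norm_eq_abs]
  have := (NNReal.coe_le_coe.2 habs)
  rw [coe_nnnorm, NNReal.coe_pow, hPc] at this
  linarith

/-- The map `𝒪_L → 𝒪_ℂ` induced by a ring embedding `L →+* ℂ`. -/
noncomputable def embInt {L : Type*} [Field L] (ι : L →+* ℂ) :
    integralClosure ℤ L →+* integralClosure ℤ ℂ where
  toFun x := ⟨ι (x : L), IsIntegral.map ι.toIntAlgHom x.2⟩
  map_one' := by ext; simp
  map_mul' x y := by ext; simp
  map_zero' := by ext; simp
  map_add' x y := by ext; simp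

@[simp] lemma embInt_apply {L : Type*} [Field L] (ι : L →+* ℂ)
    (x : integralClosure ℤ L) : (embInt ι x : ℂ) = ι (x : L) := rfl

lemma one_le_re_of_hom {L : Type*} [Field L]
    (htr : ∀ (σ : L →+* ℂ) (y : L), (σ y).im = 0)
    (α u₁ u₂ u₃ u₄ : integralClosure ℤ L)
    (h2 : α = 1 + u₁ ^ 2 + u₂ ^ 2 + u₃ ^ 2 + u₄ ^ 2)
    (σ : L →+* ℂ) :
    σ (α : L) = ((σ (α : L)).re : ℂ) ∧ 1 ≤ (σ (α : L)).re := by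
  have hα : (α : L) = 1 + (u₁ : L) ^ 2 + (u₂ : L) ^ 2 + (u₃ : L) ^ 2 + (u₄ : L) ^ 2 := by
    rw [h2]; push_cast; ring
  constructor
  · exact (Complex.conj_eq_iff_re.1 (Complex.conj_eq_iff_im.2 (htr σ _))).symm
  · have hre : (σ (α : L)).re
        = 1 + (σ u₁).re ^ 2 + (σ u₂).re ^ 2 + (σ u₃).re ^ 2 + (σ u₄).re ^ 2 := by
      rw [hα]
      simp only [pow_two, map_add, map_one, map_mul, Complex.add_re, Complex.one_re,
        Complex.mul_re, htr σ]
      ring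
    nlinarith [sq_nonneg (σ (u₁ : L)).re, sq_nonneg (σ (u₂ : L)).re,
      sq_nonneg (σ (u₃ : L)).re, sq_nonneg (σ (u₄ : L)).re]

lemma key_agree (L : Type*) [Field L] [CharZero L] [Algebra.IsAlgebraic ℚ L]
    (htr : ∀ (σ : L →+* ℂ) (y : L), (σ y).im = 0)
    (K : Type*) [Field K] [NumberField K] [Algebra K L]
    (α : integralClosure ℤ L)
    (b : integralClosure ℤ K) (I : Ideal (integralClosure ℤ K))
    (u₁ u₂ u₃ u₄ : integralClosure ℤ L)
    (h1 : I.map (algebraMap (integralClosure ℤ K) (integralClosure ℤ L))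
      ≤ Ideal.span {(2 * α + 1) ^ 2})
    (h2 : α = 1 + u₁ ^ 2 + u₂ ^ 2 + u₃ ^ 2 + u₄ ^ 2)
    (h3 : α - algebraMap (integralClosure ℤ K) (integralClosure ℤ L) b
      ∈ I.map (algebraMap (integralClosure ℤ K) (integralClosure ℤ L)))
    (φ ψ : L →+* ℂ)
    (hagree : ∀ k : K, φ (algebraMap K L k) = ψ (algebraMap K L k)) :
    φ (α : L) = ψ (α : L) := by
  classical
  set Φ : integralClosure ℤ L →+* integralClosure ℤ ℂ := embInt φ with hΦ
  set Ψ : integralClosure ℤ L →+* integralClosure ℤ ℂ := embInt ψ with hΨ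
  set g : integralClosure ℤ K →+* integralClosure ℤ L :=
    algebraMap (integralClosure ℤ K) (integralClosure ℤ L) with hg
  have hcomp : Φ.comp g = Ψ.comp g := by
    ext k
    show φ ((g k : L)) = ψ ((g k : L))
    exact hagree (k : K)
  set J : Ideal (integralClosure ℤ ℂ) := I.map (Φ.comp g) with hJ
  -- δ := Φ α - Ψ α lies in J
  have hδJ : Φ α - Ψ α ∈ J := by
    have hA : Φ (α - g b) ∈ J := by
      have := Ideal.mem_map_of_mem Φ h3
      rwa [Ideal.map_map] at this
    have hB : Ψ (α - g b) ∈ J := by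
      have := Ideal.mem_map_of_mem Ψ h3
      rw [Ideal.map_map, ← hcomp] at this
      exact this
    have : Φ α - Ψ α = Φ (α - g b) - Ψ (α - g b) := by
      have hb : Φ (g b) = Ψ (g b) := by rw [← RingHom.comp_apply, hcomp, RingHom.comp_apply]
      rw [map_sub, map_sub, hb]; ring
    rw [this]
    exact sub_mem hA hB
  have hJA : J ≤ Ideal.span {(2 * Φ α + 1) ^ 2} := by
    rw [hJ, ← Ideal.map_map]
    refine le_trans (Ideal.map_mono h1) ?_
    rw [Ideal.map_span, Set.image_singleton]
    have : Φ ((2 * α + 1) ^ 2) = (2 * Φ α + 1) ^ 2 := by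
      rw [map_pow, map_add, map_mul, map_one, map_ofNat]
    rw [this]
  have hJB : J ≤ Ideal.span {(2 * Ψ α + 1) ^ 2} := by
    rw [hJ, hcomp, ← Ideal.map_map]
    refine le_trans (Ideal.map_mono h1) ?_
    rw [Ideal.map_span, Set.image_singleton]
    have : Ψ ((2 * α + 1) ^ 2) = (2 * Ψ α + 1) ^ 2 := by
      rw [map_pow, map_add, map_mul, map_one, map_ofNat]
    rw [this]
  obtain ⟨r, hr⟩ := Ideal.mem_span_singleton.1 (hJA hδJ)
  obtain ⟨s, hs⟩ := Ideal.mem_span_singleton.1 (hJB hδJ)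
  -- pass to complex numbers
  set A : ℂ := φ (α : L) with hA
  set B : ℂ := ψ (α : L) with hB
  have hrC : (A - B : ℂ) = (2 * A + 1) ^ 2 * (r : ℂ) := by
    have h0 := congrArg (fun x : integralClosure ℤ ℂ => (x : ℂ)) hr
    push_cast at h0
    have h2c : ((2 : integralClosure ℤ ℂ) : ℂ) = 2 := rfl
    simpa [hΦ, hΨ, hA, hB, h2c] using h0
  have hsC : (A - B : ℂ) = (2 * B + 1) ^ 2 * (s : ℂ) := by
    have h0 := congrArg (fun x : integralClosure ℤ ℂ => (x : ℂ)) hs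
    push_cast at h0
    have h2c : ((2 : integralClosure ℤ ℂ) : ℂ) = 2 := rfl
    simpa [hΦ, hΨ, hA, hB, h2c] using h0
  -- the compositum field
  set F : IntermediateField ℚ ℂ :=
    IntermediateField.adjoin ℚ (Set.range φ ∪ Set.range ψ) with hF
  have halg : ∀ x ∈ (Set.range φ ∪ Set.range ψ : Set ℂ), IsIntegral ℚ x := by
    rintro x (⟨y, rfl⟩ | ⟨y, rfl⟩)
    · exact ((Algebra.IsAlgebraic.isAlgebraic (R := ℚ) y).isIntegral).map φ.toRatAlgHom
    · exact ((Algebra.IsAlgebraic.isAlgebraic (R := ℚ) y).isIntegral).map ψ.toRatAlgHom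
  haveI halgF : Algebra.IsAlgebraic ℚ F := IntermediateField.isAlgebraic_adjoin halg
  have hφmem : ∀ y : L, φ y ∈ F :=
    fun y => IntermediateField.subset_adjoin ℚ _ (Or.inl ⟨y, rfl⟩)
  have hψmem : ∀ y : L, ψ y ∈ F :=
    fun y => IntermediateField.subset_adjoin ℚ _ (Or.inr ⟨y, rfl⟩)
  -- positivity of A and B
  obtain ⟨hAre, hA1⟩ := one_le_re_of_hom htr α u₁ u₂ u₃ u₄ h2 φ
  have hAne : (2 * A + 1) ≠ 0 := by
    rw [hA, hAre]
    intro hcon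
    have := congrArg Complex.re hcon
    push_cast at this
    simp at this
    linarith
  obtain ⟨hBre, hB1⟩ := one_le_re_of_hom htr α u₁ u₂ u₃ u₄ h2 ψ
  have hBne : (2 * B + 1) ≠ 0 := by
    rw [hB, hBre]
    intro hcon
    have := congrArg Complex.re hcon
    push_cast at this
    simp at this
    linarith
  have h2F : (2 : ℂ) ∈ F := by
    rw [show (2:ℂ) = 1 + 1 by norm_num]
    exact add_mem (one_mem F) (one_mem F)
  -- membership of r, s in F
  have hrF : (r : ℂ) ∈ F := by
    have : (r : ℂ) = (A - B) / (2 * A + 1) ^ 2 := by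
      rw [hrC]; field_simp
    rw [this]
    exact div_mem (sub_mem (hφmem _) (hψmem _))
      (pow_mem (add_mem (mul_mem h2F (hφmem _)) (one_mem F)) 2)
  have hsF : (s : ℂ) ∈ F := by
    have : (s : ℂ) = (A - B) / (2 * B + 1) ^ 2 := by
      rw [hsC]; field_simp
    rw [this]
    exact div_mem (sub_mem (hφmem _) (hψmem _))
      (pow_mem (add_mem (mul_mem h2F (hψmem _)) (one_mem F)) 2)
  set e : F := ⟨(r : ℂ) * (s : ℂ), mul_mem hrF hsF⟩ with he
  haveI hTow : IsScalarTower ℤ F ℂ := IsScalarTower.of_algebraMap_eq fun n => by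
    simp
  have heint : IsIntegral ℤ e := by
    have hin : IsIntegral ℤ ((r : ℂ) * (s : ℂ)) := mul_mem r.2 s.2
    exact IsIntegral.tower_bot (algebraMap F ℂ).injective (x := e)
      (show IsIntegral ℤ (algebraMap F ℂ e) from hin)
  let φF : L →+* F :=
    { toFun := fun z => ⟨φ z, hφmem z⟩
      map_one' := Subtype.ext (by simp)
      map_mul' := fun a c => Subtype.ext (by simp)
      map_zero' := Subtype.ext (by simp)
      map_add' := fun a c => Subtype.ext (by simp) }
  let ψF : L →+* F :=
    { toFun := fun z => ⟨ψ z, hψmem z⟩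
      map_one' := Subtype.ext (by simp)
      map_mul' := fun a c => Subtype.ext (by simp)
      map_zero' := Subtype.ext (by simp)
      map_add' := fun a c => Subtype.ext (by simp) }
  have hFeq : (φF (α : L) - ψF (α : L)) ^ 2
      = (2 * φF (α : L) + 1) ^ 2 * (2 * ψF (α : L) + 1) ^ 2 * e := by
    apply Subtype.ext
    push_cast
    show (A - B) ^ 2 = (2 * A + 1) ^ 2 * (2 * B + 1) ^ 2 * ((r : ℂ) * (s : ℂ))
    calc (A - B) ^ 2 = ((2*A+1)^2 * (r:ℂ)) * ((2*B+1)^2 * (s:ℂ)) := by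
          rw [← hrC, ← hsC]; ring
      _ = (2*A+1)^2 * (2*B+1)^2 * ((r:ℂ) * (s:ℂ)) := by ring
  have hesmall : ∀ τ : F →ₐ[ℚ] ℂ, ‖τ e‖₊ ≤ 1/2 := by
    intro τ
    set σ₁ : L →+* ℂ := τ.toRingHom.comp φF with hσ₁
    set σ₂ : L →+* ℂ := τ.toRingHom.comp ψF with hσ₂
    obtain ⟨hxre, hx1⟩ := one_le_re_of_hom htr α u₁ u₂ u₃ u₄ h2 σ₁
    obtain ⟨hyre, hy1⟩ := one_le_re_of_hom htr α u₁ u₂ u₃ u₄ h2 σ₂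
    set x : ℝ := (σ₁ (α : L)).re with hx
    set y : ℝ := (σ₂ (α : L)).re with hy
    have hτ := congrArg τ hFeq
    simp only [map_sub, map_add, map_mul, map_pow, map_one, map_ofNat] at hτ
    have hτφ : τ (φF (α : L)) = ((x : ℝ) : ℂ) := hxre
    have hτψ : τ (ψF (α : L)) = ((y : ℝ) : ℂ) := hyre
    rw [hτφ, hτψ] at hτ
    have hxc : (2 * ((x:ℝ):ℂ) + 1) ≠ 0 := by
      intro hcon
      have := congrArg Complex.re hcon
      push_cast at this
      simp at this
      linarith
    have hyc : (2 * ((y:ℝ):ℂ) + 1) ≠ 0 := by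
      intro hcon
      have := congrArg Complex.re hcon
      push_cast at this
      simp at this
      linarith
    have hDne : ((2 * ((x:ℝ):ℂ) + 1) ^ 2 * (2 * ((y:ℝ):ℂ) + 1) ^ 2) ≠ 0 :=
      mul_ne_zero (pow_ne_zero _ hxc) (pow_ne_zero _ hyc)
    have hEeq : τ e = (((x:ℝ):ℂ) - ((y:ℝ):ℂ)) ^ 2
        / ((2 * ((x:ℝ):ℂ) + 1) ^ 2 * (2 * ((y:ℝ):ℂ) + 1) ^ 2) := by
      rw [eq_div_iff hDne]
      linear_combination -hτ
    have hEeq' : τ e = (((x - y) ^ 2 / ((2*x+1)^2 * (2*y+1)^2) : ℝ) : ℂ) := by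
      rw [hEeq]; push_cast; ring
    rw [hEeq']
    have hbound : |(x - y) ^ 2 / ((2*x+1)^2 * (2*y+1)^2)| ≤ 1/2 := by
      have hDpos : (0:ℝ) < (2*x+1)^2 * (2*y+1)^2 := by
        have hp1 : (0:ℝ) < 2*x+1 := by linarith
        have hp2 : (0:ℝ) < 2*y+1 := by linarith
        exact mul_pos (pow_pos hp1 2) (pow_pos hp2 2)
      rw [abs_div, abs_of_nonneg (sq_nonneg _), abs_of_pos hDpos,
        div_le_iff₀ hDpos]
      nlinarith [sq_nonneg (x - y), sq_nonneg (x + y), sq_nonneg (x*y - 1)]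
    rw [← NNReal.coe_le_coe, coe_nnnorm, Complex.norm_real, Real.norm_eq_abs]
    have hhalf : ((1/2 : NNReal) : ℝ) = 1/2 := by norm_num
    rw [hhalf]
    exact hbound
  have he0 : e = 0 := small_conj_eq_zero e heint hesmall
  have hrs0 : (r : ℂ) * (s : ℂ) = 0 := congrArg (fun x : F => (x : ℂ)) he0
  have hsq : (A - B) ^ 2 = 0 := by
    calc (A - B) ^ 2 = ((2*A+1)^2 * (r:ℂ)) * ((2*B+1)^2 * (s:ℂ)) := by rw [← hrC, ← hsC]; ring
      _ = (2*A+1)^2 * (2*B+1)^2 * ((r:ℂ) * (s:ℂ)) := by ring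
      _ = 0 := by rw [hrs0, mul_zero]
  have := pow_eq_zero_iff (n := 2) (by norm_num) |>.1 hsq
  rw [hA, hB] at this ⊢
  linear_combination this

/-- Corollary `CONG2`.  Let `𝐋` be a totally real algebraic extension of
`ℚ`, `K ⊆ 𝐋` a number field, and `α ∈ 𝒪_𝐋`.  If there exist `b ∈ 𝒪_K`, an ideal `I` of
`𝒪_K`, and `u₁, …, u₄ ∈ 𝒪_𝐋` with `I·𝒪_𝐋 ⊆ (2α+1)²·𝒪_𝐋`, `α = 1 + u₁² + ⋯ + u₄²`, and
`α ≡ b (mod I·𝒪_𝐋)`, then `α` comes from `𝒪_K`. -/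
theorem stmt_9 (L : Type*) [Field L] [CharZero L] [Algebra.IsAlgebraic ℚ L]
    (htr : ∀ (σ : L →+* ℂ) (y : L), (σ y).im = 0)
    (K : Type*) [Field K] [NumberField K] [Algebra K L]
    (α : integralClosure ℤ L)
    (b : integralClosure ℤ K) (I : Ideal (integralClosure ℤ K))
    (u₁ u₂ u₃ u₄ : integralClosure ℤ L)
    (h1 : I.map (algebraMap (integralClosure ℤ K) (integralClosure ℤ L))
      ≤ Ideal.span {(2 * α + 1) ^ 2})
    (h2 : α = 1 + u₁ ^ 2 + u₂ ^ 2 + u₃ ^ 2 + u₄ ^ 2)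
    (h3 : α - algebraMap (integralClosure ℤ K) (integralClosure ℤ L) b
      ∈ I.map (algebraMap (integralClosure ℤ K) (integralClosure ℤ L))) :
    ∃ y : integralClosure ℤ K, algebraMap K L (y : K) = (α : L) := by
  classical
  haveI hQKL : IsScalarTower ℚ K L :=
    IsScalarTower.of_algebraMap_eq' (Subsingleton.elim _ _)
  let ι : L →ₐ[ℚ] ℂ := IsAlgClosed.lift
  letI : Algebra K ℂ := (ι.toRingHom.comp (algebraMap K L)).toAlgebra
  haveI : Algebra.IsAlgebraic K L := Algebra.IsAlgebraic.tower_top (K := ℚ) K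
  have hclaim : ∀ ψ₁ ψ₂ : L →ₐ[K] ℂ, ψ₁ (α : L) = ψ₂ (α : L) := by
    intro ψ₁ ψ₂
    exact key_agree L htr K α b I u₁ u₂ u₃ u₄ h1 h2 h3 ψ₁.toRingHom ψ₂.toRingHom
      (fun k => (ψ₁.commutes k).trans (ψ₂.commutes k).symm)
  have hαK : IsIntegral K (α : L) := IsIntegral.tower_top α.2
  have hnd : (minpoly K (α : L)).natDegree = 1 := by
    by_contra hne
    have h2le : 2 ≤ (minpoly K (α : L)).natDegree := by
      have := minpoly.natDegree_pos hαK
      omega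
    set P : Polynomial ℂ := (minpoly K (α : L)).map (algebraMap K ℂ) with hP
    have hsep : P.Separable := ((minpoly.irreducible hαK).separable).map
    have hnodup := Polynomial.nodup_roots hsep
    have hsp : P.Splits :=
      IsAlgClosed.splits _
    have hcard : P.roots.toFinset.card = P.natDegree := by
      rw [Multiset.toFinset_card_of_nodup hnodup]
      exact Polynomial.splits_iff_card_roots.1 hsp
    have hdeg : P.natDegree = (minpoly K (α : L)).natDegree :=
      (minpoly.monic hαK).natDegree_map _
    have hlt : 1 < P.roots.toFinset.card := by rw [hcard, hdeg]; omega
    obtain ⟨z₁, hz₁, z₂, hz₂, hzne⟩ := Finset.one_lt_card.1 hlt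
    have hrs : ∀ z ∈ P.roots.toFinset, ∃ ψ : L →ₐ[K] ℂ, ψ (α : L) = z := by
      intro z hz
      have hzr : z ∈ (minpoly K (α : L)).rootSet ℂ := by
        rw [Polynomial.mem_rootSet]
        refine ⟨minpoly.ne_zero hαK, ?_⟩
        rw [Polynomial.aeval_def, Polynomial.eval₂_eq_eval_map]
        exact Polynomial.isRoot_of_mem_roots (Multiset.mem_toFinset.1 hz)
      rw [← Algebra.IsAlgebraic.range_eval_eq_rootSet_minpoly ℂ (α : L)] at hzr
      exact hzr
    obtain ⟨ψ₁, hψ₁⟩ := hrs z₁ hz₁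
    obtain ⟨ψ₂, hψ₂⟩ := hrs z₂ hz₂
    exact hzne (hψ₁ ▸ hψ₂ ▸ hclaim ψ₁ ψ₂)
  obtain ⟨k, hk⟩ := (minpoly.natDegree_eq_one_iff).1 hnd
  refine ⟨⟨k, ?_⟩, hk⟩
  have : IsIntegral ℤ (algebraMap K L k) := hk.symm ▸ α.2
  exact (isIntegral_algebraMap_iff (algebraMap K L).injective).1 this
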